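/- Let G be a finite graph, let κ, b₀ be positive integers with 2·b₀·κ + b₀² < C(κ,2), and let W ⊆ V(G) be such that every vertex v ∉ W has degree less than b₀ in G and has at most b₀² vertices at distance exactly 2 from it in G. Suppose f assigns to each vertex of W a 2-element subset of {1,…,κ} such that any two adjacent vertices of W receive disjoint labels and any two vertices of W at distance 2 in G receive distinct labels. Then f extends to a proper 2-tone κ-coloring of all of G, i.e., a labeling of V(G) by 2-element subsets of {1,…,κ} in which adjacent vertices receive disjoint labels and vertices at distance 2 receive distinct labels. -/

import Mathlib

open Filter

noncomputable instance {n : ℕ} : Fintype (SimpleGraph (Fin n)) :=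
  Fintype.ofFinite _

/-- The number of edges of a graph on `Fin n`. -/
noncomputable def edgeCount {n : ℕ} (G : SimpleGraph (Fin n)) : ℕ := G.edgeSet.ncard

open scoped Classical in
/-- The probability of the event `A` under the Erdős–Rényi random graph `G_{n,p}`:
each of the `C(n,2)` potential edges appears independently with probability `p`. -/
noncomputable def erProb (n : ℕ) (p : ℝ) (A : Set (SimpleGraph (Fin n))) : ℝ :=
  ∑ G : SimpleGraph (Fin n),
    if G ∈ A then p ^ edgeCount G * (1 - p) ^ (n.choose 2 - edgeCount G) else 0

/-- `f` is a proper `t`-tone `k`-coloring of `G`: every vertex gets a `t`-element subset of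
`{0, …, k-1}`, and `|f u ∩ f v| < d(u,v)` for distinct vertices in a common component. -/
def IsTToneColoring {V : Type*} (G : SimpleGraph V) (t k : ℕ) (f : V → Finset ℕ) : Prop :=
  (∀ v, f v ⊆ Finset.range k ∧ (f v).card = t) ∧
    ∀ u v, u ≠ v → G.Reachable u v → ((f u) ∩ (f v)).card < G.dist u v

/-- The `t`-tone chromatic number `τ_t(G)`. -/
noncomputable def toneChromatic {V : Type*} (G : SimpleGraph V) (t : ℕ) : ℕ :=
  sInf {k | ∃ f, IsTToneColoring G t k f}

/-- The ordinary chromatic number, as a natural number. -/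
noncomputable def chromNum {V : Type*} (G : SimpleGraph V) : ℕ := G.chromaticNumber.toNat

/-- The maximum degree `Δ(G)`. -/
noncomputable def maxDeg {n : ℕ} (G : SimpleGraph (Fin n)) : ℕ :=
  Finset.univ.sup fun v => (G.neighborSet v).ncard

/-- The independence number `α(G)`. -/
noncomputable def indepNum {V : Type*} (G : SimpleGraph V) : ℕ :=
  sSup {k | ∃ S : Set V, S.ncard = k ∧ ∀ u ∈ S, ∀ v ∈ S, ¬ G.Adj u v}

/-- The set of vertices at graph distance at most `r` from the vertex set `Z`;
this equals `Z ∪ N¹(Z) ∪ ⋯ ∪ N^r(Z)` where `N^i(Z)` is the set of vertices at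
distance exactly `i` from `Z`. -/
def distBall {V : Type*} (G : SimpleGraph V) (Z : Set V) (r : ℕ) : Set V :=
  {v | ∃ u ∈ Z, G.Reachable u v ∧ G.dist u v ≤ r}

/-- The `i`-th power graph `G^i`: `u ~ v` iff `1 ≤ d_G(u,v) ≤ i`. -/
def powerGraph {V : Type*} (G : SimpleGraph V) (i : ℕ) : SimpleGraph V where
  Adj u v := u ≠ v ∧ G.Reachable u v ∧ G.dist u v ≤ i
  symm := ⟨by
    rintro u v ⟨h1, h2, h3⟩
    exact ⟨h1.symm, h2.symm, by rwa [SimpleGraph.dist_comm]⟩⟩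
  loopless := ⟨by rintro v ⟨h, _⟩; exact h rfl⟩

/-- The set `V₀` of vertices of degree at least `(ln n)^{1/4}`. -/
def highDegSet (n : ℕ) (G : SimpleGraph (Fin n)) : Set (Fin n) :=
  {v | Real.log n ^ ((1 : ℝ)/4) ≤ ((G.neighborSet v).ncard : ℝ)}


open Classical in
lemma pairs_meeting_card_le (κ : ℕ) (s : Finset ℕ) (hs : s.card = 2) :
    (((Finset.range κ).powersetCard 2).filter fun p => ¬ Disjoint p s).card ≤ 2 * κ := by
  classical
  have hsub : (((Finset.range κ).powersetCard 2).filter fun p => ¬ Disjoint p s) ⊆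
      s.biUnion fun a => (Finset.range κ).image fun b => ({a, b} : Finset ℕ) := by
    intro p hp
    rw [Finset.mem_filter, Finset.mem_powersetCard] at hp
    obtain ⟨⟨hpsub, hpcard⟩, hpd⟩ := hp
    obtain ⟨a, hap, has⟩ := Finset.not_disjoint_iff.mp hpd
    have herase : (p.erase a).card = 1 := by
      rw [Finset.card_erase_of_mem hap, hpcard]
    obtain ⟨b, hb⟩ := Finset.card_eq_one.mp herase
    have hbp : b ∈ p := by
      have : b ∈ p.erase a := by rw [hb]; exact Finset.mem_singleton_self b
      exact Finset.mem_of_mem_erase this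
    have hba : b ≠ a := by
      have : b ∈ p.erase a := by rw [hb]; exact Finset.mem_singleton_self b
      exact Finset.ne_of_mem_erase this
    have hpeq : p = {a, b} := by
      apply Finset.eq_of_subset_of_card_le
      · intro x hx
        rcases Finset.mem_insert.mp (by
          have : p = insert a (p.erase a) := (Finset.insert_erase hap).symm
          rw [this, hb] at hx; exact hx) with h | h
        · simp [h]
        · simp [Finset.mem_singleton.mp h]
      · rw [hpcard]
        exact Finset.card_insert_le _ _ |>.trans (by simp)
    rw [Finset.mem_biUnion]
    exact ⟨a, has, Finset.mem_image.mpr ⟨b, Finset.mem_range.mp (hpsub hbp) |> Finset.mem_range.mpr, hpeq.symm⟩⟩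
  calc _ ≤ (s.biUnion fun a => (Finset.range κ).image fun b => ({a, b} : Finset ℕ)).card :=
        Finset.card_le_card hsub
    _ ≤ ∑ a ∈ s, ((Finset.range κ).image fun b => ({a, b} : Finset ℕ)).card :=
        Finset.card_biUnion_le
    _ ≤ ∑ _a ∈ s, κ := Finset.sum_le_sum fun a _ =>
        (Finset.card_image_le).trans (by simp)
    _ = 2 * κ := by rw [Finset.sum_const, hs]; ring


lemma extend_aux {V : Type*} [Fintype V] (G : SimpleGraph V) (κ b₀ : ℕ)
    (hcount : 2 * b₀ * κ + b₀ ^ 2 < κ.choose 2) :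
    ∀ n : ℕ, ∀ W : Set V, ∀ f : V → Finset ℕ, Wᶜ.ncard ≤ n →
    (∀ v ∉ W, (G.neighborSet v).ncard < b₀) →
    (∀ v ∉ W, {u | G.dist v u = 2}.ncard ≤ b₀ ^ 2) →
    (∀ v ∈ W, f v ⊆ Finset.range κ ∧ (f v).card = 2) →
    (∀ u ∈ W, ∀ w ∈ W, G.Adj u w → Disjoint (f u) (f w)) →
    (∀ u ∈ W, ∀ w ∈ W, G.dist u w = 2 → f u ≠ f w) →
    ∃ g : V → Finset ℕ, (∀ v ∈ W, g v = f v) ∧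
      (∀ v, g v ⊆ Finset.range κ ∧ (g v).card = 2) ∧
      (∀ u w, G.Adj u w → Disjoint (g u) (g w)) ∧
      (∀ u w, G.dist u w = 2 → g u ≠ g w) := by
  classical
  intro n
  induction n with
  | zero =>
    intro W f hcard hdeg hdist2 hf1 hf2 hf3
    have hW : W = Set.univ := by
      have : Wᶜ = ∅ := by
        rw [← Set.ncard_eq_zero (Set.toFinite _)]
        omega
      simpa [Set.compl_empty_iff] using this
    subst hW
    refine ⟨f, fun v _ => rfl, fun v => hf1 v trivial, fun u w h => hf2 u trivial w trivial h,
      fun u w h => hf3 u trivial w trivial h⟩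
  | succ n ih =>
    intro W f hcard hdeg hdist2 hf1 hf2 hf3
    by_cases hW : W = Set.univ
    · subst hW
      refine ⟨f, fun v _ => rfl, fun v => hf1 v trivial, fun u w h => hf2 u trivial w trivial h,
        fun u w h => hf3 u trivial w trivial h⟩
    · obtain ⟨v, hv⟩ : ∃ v, v ∉ W := by
        by_contra h; push_neg at h; exact hW (Set.eq_univ_of_forall h)
      set pairs := (Finset.range κ).powersetCard 2 with hpairs
      set N : Finset V := Finset.univ.filter (fun u => u ∈ W ∧ G.Adj v u) with hN
      set D : Finset V := Finset.univ.filter (fun u => u ∈ W ∧ G.dist v u = 2) with hD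
      set bad : Finset (Finset ℕ) :=
        (N.biUnion fun u => pairs.filter fun p => ¬ Disjoint p (f u)) ∪ D.image f with hbad
      have hNcard : N.card ≤ b₀ := by
        have h1 : N ⊆ G.neighborFinset v := by
          intro u hu
          rw [hN, Finset.mem_filter] at hu
          exact (G.mem_neighborFinset v u).mpr hu.2.2
        have h2 : (G.neighborSet v).ncard = (G.neighborFinset v).card := by
          rw [SimpleGraph.neighborFinset_def, Set.ncard_eq_toFinset_card']
        have h3 := Finset.card_le_card h1
        have := hdeg v hv
        omega
      have hDcard : D.card ≤ b₀ ^ 2 := by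
        have h1 : D ⊆ Finset.univ.filter (fun u => G.dist v u = 2) := by
          intro u hu; rw [hD, Finset.mem_filter] at hu
          exact Finset.mem_filter.mpr ⟨Finset.mem_univ u, hu.2.2⟩
        have h2 : {u : V | G.dist v u = 2}.ncard
            = (Finset.univ.filter (fun u => G.dist v u = 2)).card := by
          rw [Set.ncard_eq_toFinset_card']
          congr 1
          ext u; simp
        have h3 := Finset.card_le_card h1
        have := hdist2 v hv
        omega
      have hbadcard : bad.card < pairs.card := by
        have hpc : pairs.card = κ.choose 2 := by
          rw [hpairs, Finset.card_powersetCard, Finset.card_range]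
        have h1 : (N.biUnion fun u => pairs.filter fun p => ¬ Disjoint p (f u)).card
            ≤ N.card * (2 * κ) := by
          refine (Finset.card_biUnion_le).trans ?_
          rw [← Finset.sum_const_nat (m := 2 * κ) (fun _ _ => rfl)]
          refine Finset.sum_le_sum fun u hu => ?_
          rw [hN, Finset.mem_filter] at hu
          exact pairs_meeting_card_le κ (f u) (hf1 u hu.2.1).2
        have h2 : (D.image f).card ≤ b₀ ^ 2 := Finset.card_image_le.trans hDcard
        have h3 : bad.card ≤ N.card * (2 * κ) + b₀ ^ 2 :=
          (Finset.card_union_le _ _).trans (by omega)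
        have h4 : N.card * (2 * κ) ≤ 2 * b₀ * κ :=
          le_trans (Nat.mul_le_mul_right _ hNcard) (by ring_nf; omega)
        omega
      obtain ⟨c, hcp, hcb⟩ : ∃ c ∈ pairs, c ∉ bad := by
        by_contra h
        push_neg at h
        exact absurd (Finset.card_le_card h) (by omega)
      have hcr : c ⊆ Finset.range κ ∧ c.card = 2 := by
        rw [hpairs, Finset.mem_powersetCard] at hcp; exact hcp
      set f' : V → Finset ℕ := Function.update f v c with hf'
      have hfW : ∀ w ∈ W, f' w = f w := by
        intro w hw
        have hwv : w ≠ v := by rintro rfl; exact hv hw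
        exact Function.update_of_ne hwv _ _
      have hfv : f' v = c := Function.update_self _ _ _
      -- c is disjoint from colored neighbors
      have hdisj : ∀ w ∈ W, G.Adj v w → Disjoint c (f w) := by
        intro w hw hadj
        by_contra hnd
        apply hcb
        rw [hbad, Finset.mem_union]
        left
        rw [Finset.mem_biUnion]
        refine ⟨w, ?_, Finset.mem_filter.mpr ⟨hcp, hnd⟩⟩
        rw [hN, Finset.mem_filter]
        exact ⟨Finset.mem_univ w, hw, hadj⟩
      have hne2 : ∀ w ∈ W, G.dist v w = 2 → c ≠ f w := by
        intro w hw hd hc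
        apply hcb
        rw [hbad, Finset.mem_union]
        right
        refine Finset.mem_image.mpr ⟨w, ?_, hc.symm⟩
        rw [hD, Finset.mem_filter]
        exact ⟨Finset.mem_univ w, hw, hd⟩
      have hvW : v ∈ Wᶜ := hv
      have hcard' : (insert v W)ᶜ.ncard ≤ n := by
        have he : (insert v W)ᶜ = Wᶜ \ {v} := by
          ext x; simp [and_comm]
        have := Set.ncard_diff_singleton_lt_of_mem hvW (Set.toFinite _)
        rw [he]; omega
      refine (ih (insert v W) f' hcard'
        (fun u hu => hdeg u (fun h => hu (Set.mem_insert_of_mem v h)))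
        (fun u hu => hdist2 u (fun h => hu (Set.mem_insert_of_mem v h)))
        ?_ ?_ ?_).imp fun g ⟨hg0, hg1, hg2, hg3⟩ =>
          ⟨fun w hw => (hg0 w (Set.mem_insert_of_mem v hw)).trans (hfW w hw), hg1, hg2, hg3⟩
      · rintro w (rfl | hw)
        · rw [hfv]; exact hcr
        · rw [hfW w hw]; exact hf1 w hw
      · rintro u (rfl | hu) w (rfl | hw)
        · intro h; exact absurd h (G.loopless.irrefl _)
        · intro h; rw [hfv, hfW w hw]; exact hdisj w hw h
        · intro h; rw [hfv, hfW u hu]; exact (hdisj u hu h.symm).symm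
        · intro h; rw [hfW u hu, hfW w hw]; exact hf2 u hu w hw h
      · rintro u (rfl | hu) w (rfl | hw)
        · intro h; rw [SimpleGraph.dist_self] at h; exact absurd h (by decide)
        · intro h; rw [hfv, hfW w hw]; exact hne2 w hw h
        · intro h; rw [hfv, hfW u hu]
          exact (hne2 u hu (by rwa [SimpleGraph.dist_comm])).symm
        · intro h; rw [hfW u hu, hfW w hw]; exact hf3 u hu w hw h

/-- If `2 b₀ κ + b₀² < C(κ,2)`, every vertex outside `W` has degree `< b₀`
and at most `b₀²` vertices at distance exactly 2, and `f` is a partial 2-tone `κ`-coloring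
defined on `W` (adjacent vertices of `W` get disjoint labels, vertices of `W` at distance 2
in `G` get distinct labels), then `f` extends to a proper 2-tone `κ`-coloring of all of `G`. -/
theorem greedy_two_tone_extension {V : Type*} [Fintype V] (G : SimpleGraph V)
    (κ b₀ : ℕ) (hκ : 0 < κ) (hb : 0 < b₀)
    (hcount : 2 * b₀ * κ + b₀ ^ 2 < κ.choose 2)
    (W : Set V)
    (hdeg : ∀ v : V, v ∉ W → (G.neighborSet v).ncard < b₀)
    (hdist2 : ∀ v : V, v ∉ W → {u : V | G.dist v u = 2}.ncard ≤ b₀ ^ 2)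
    (f : V → Finset ℕ)
    (hf1 : ∀ v ∈ W, f v ⊆ Finset.range κ ∧ (f v).card = 2)
    (hf2 : ∀ u ∈ W, ∀ v ∈ W, G.Adj u v → Disjoint (f u) (f v))
    (hf3 : ∀ u ∈ W, ∀ v ∈ W, G.dist u v = 2 → f u ≠ f v) :
    ∃ g : V → Finset ℕ, (∀ v ∈ W, g v = f v) ∧
      (∀ v, g v ⊆ Finset.range κ ∧ (g v).card = 2) ∧
      (∀ u v : V, G.Adj u v → Disjoint (g u) (g v)) ∧
      (∀ u v : V, G.dist u v = 2 → g u ≠ g v) := by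
  exact extend_aux G κ b₀ hcount Wᶜ.ncard W f le_rfl hdeg hdist2 hf1 hf2 hf3
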